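/- Let M ∈ GL(2,ℝ) and Λ = Mℤ² a lattice in ℝ². Then for every c > 0 and every z ∈ ℝ²: Σ_{λ∈Λ} e^{−c‖λ+z‖²} ≤ Σ_{λ∈Λ} e^{−c‖λ‖²}. (The heat kernel on the torus ℝ²/Λ attains its maximal temperature at the lattice points.) -/

import Mathlib

noncomputable section
set_option maxHeartbeats 1000000
open Real Complex

lemma gauss_summable' (a b : ℝ) (ha : 0 < a) :
    Summable fun n : ℤ => Real.exp (-a * (n : ℝ) ^ 2 + b * n) := by
  have hπ := Real.pi_pos
  have h : Summable fun n : ℤ =>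
      jacobiTheta₂_term n (((-b / (2 * π) : ℝ) : ℂ) * Complex.I) (((a / π : ℝ) : ℂ) * Complex.I) := by
    rw [summable_jacobiTheta₂_term_iff]
    simp [Complex.mul_I_im]
    positivity
  have h2 := h.norm
  refine h2.congr fun n => ?_
  rw [norm_jacobiTheta₂_term]
  simp only [Complex.mul_I_im, Complex.ofReal_re]
  rw [show -π * n ^ 2 * (a / π) - 2 * π * n * (-b / (2 * π)) = -a * n ^ 2 + b * n by
    field_simp; ring]


lemma gauss_summable (a : ℝ) (ha : 0 < a) (y : ℝ) :
    Summable fun n : ℤ => Real.exp (-a * ((n : ℝ) + y) ^ 2) := by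
  have := (gauss_summable' a (-2 * a * y) ha).mul_left (Real.exp (-a * y ^ 2))
  refine this.congr fun n => ?_
  rw [← Real.exp_add]
  ring_nf


lemma poisson1 (g θ y : ℝ) (hg : 0 < g) :
    ∑' n : ℤ, Complex.exp (-(g : ℂ) * ((n : ℂ) + (y : ℂ)) ^ 2
        + 2 * (π : ℂ) * Complex.I * (θ : ℂ) * ((n : ℂ) + (y : ℂ))) =
      (Real.sqrt (π / g) : ℂ) * ∑' m : ℤ,
        (Real.exp (-(π ^ 2 / g) * ((m : ℝ) - θ) ^ 2) : ℂ)
          * Complex.exp (2 * (π : ℂ) * Complex.I * (m : ℂ) * (y : ℂ)) := by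
  have hπ : (0 : ℝ) < π := Real.pi_pos
  have hπ' : (π : ℂ) ≠ 0 := Complex.ofReal_ne_zero.mpr hπ.ne'
  have hg' : (g : ℂ) ≠ 0 := Complex.ofReal_ne_zero.mpr hg.ne'
  have ha : 0 < (((g / π : ℝ) : ℂ)).re := by
    rw [Complex.ofReal_re]; positivity
  set b : ℂ := ((-(g * y) / π : ℝ) : ℂ) + Complex.I * (θ : ℂ) with hb
  have key := Complex.tsum_exp_neg_quadratic ha b
  set C : ℂ := Complex.exp ((g : ℂ) * (y : ℂ) ^ 2 - 2 * (π : ℂ) * Complex.I * (θ : ℂ) * (y : ℂ))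
    with hC
  have hC0 : C ≠ 0 := Complex.exp_ne_zero _
  have hL : ∀ n : ℤ, Complex.exp (-(π : ℂ) * ((g / π : ℝ) : ℂ) * (n : ℂ) ^ 2 + 2 * π * b * n)
      = C * Complex.exp (-(g : ℂ) * ((n : ℂ) + (y : ℂ)) ^ 2
        + 2 * (π : ℂ) * Complex.I * (θ : ℂ) * ((n : ℂ) + (y : ℂ))) := by
    intro n
    rw [hC, ← Complex.exp_add, hb]
    congr 1
    push_cast
    field_simp
    ring
  have hR : ∀ n : ℤ, Complex.exp (-(π : ℂ) / ((g / π : ℝ) : ℂ) * ((n : ℂ) + Complex.I * b) ^ 2)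
      = C * ((Real.exp (-(π ^ 2 / g) * ((n : ℝ) - θ) ^ 2) : ℂ)
          * Complex.exp (2 * (π : ℂ) * Complex.I * (n : ℂ) * (y : ℂ))) := by
    intro n
    rw [hC, Complex.ofReal_exp, ← Complex.exp_add, ← Complex.exp_add, hb]
    congr 1
    push_cast
    field_simp
    ring_nf
    simp only [Complex.I_sq, Complex.I_pow_three, Complex.I_pow_four]
    ring_nf
  have hK : (1 : ℂ) / (((g / π : ℝ) : ℂ)) ^ (1 / 2 : ℂ) = (Real.sqrt (π / g) : ℂ) := by
    rw [show ((1 : ℂ) / 2) = ((1 / 2 : ℝ) : ℂ) by norm_num,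
      ← Complex.ofReal_cpow (by positivity)]
    rw [show (1 : ℂ) = ((1 : ℝ) : ℂ) by norm_num, ← Complex.ofReal_div]
    congr 1
    rw [Real.sqrt_eq_rpow, one_div, ← Real.inv_rpow (by positivity), inv_div]
  rw [tsum_congr hL, tsum_congr hR, tsum_mul_left, tsum_mul_left, hK] at key
  refine mul_left_cancel₀ hC0 ?_
  rw [key]
  ring


lemma norm_aux (r x : ℝ) : ‖(r : ℂ) * Complex.exp (2 * (π : ℂ) * Complex.I * x)‖ = |r| := by
  rw [norm_mul, Complex.norm_real, show (2 * (π : ℂ) * Complex.I * x) = ((2 * π * x : ℝ) : ℂ) * Complex.I by push_cast; ring]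
  rw [Complex.norm_exp_ofReal_mul_I, mul_one, Real.norm_eq_abs]


lemma poisson1_real (g y : ℝ) (hg : 0 < g) :
    ((∑' n : ℤ, Real.exp (-g * ((n : ℝ) + y) ^ 2) : ℝ) : ℂ) =
      (Real.sqrt (π / g) : ℂ) * ∑' m : ℤ,
        (Real.exp (-(π ^ 2 / g) * (m : ℝ) ^ 2) : ℂ)
          * Complex.exp (2 * (π : ℂ) * Complex.I * (m : ℂ) * (y : ℂ)) := by
  have h := poisson1 g 0 y hg
  simp only [Complex.ofReal_zero, mul_zero, zero_mul, add_zero, sub_zero] at h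
  rw [Complex.ofReal_tsum, ← h]
  exact tsum_congr fun n => by rw [Complex.ofReal_exp]; congr 1; push_cast; ring


lemma tsum_zero_eq (g : ℝ) (hg : 0 < g) :
    ∑' n : ℤ, Real.exp (-g * (n : ℝ) ^ 2) =
      Real.sqrt (π / g) * ∑' m : ℤ, Real.exp (-(π ^ 2 / g) * (m : ℝ) ^ 2) := by
  have h := poisson1_real g 0 hg
  simp only [Complex.ofReal_zero, mul_zero, Complex.exp_zero, mul_one, add_zero] at h
  exact_mod_cast h


lemma oneD (g y : ℝ) (hg : 0 < g) :
    ∑' n : ℤ, Real.exp (-g * ((n : ℝ) + y) ^ 2) ≤ ∑' n : ℤ, Real.exp (-g * (n : ℝ) ^ 2) := by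
  have hg' : 0 < π ^ 2 / g := by positivity
  have hsum : Summable fun m : ℤ => Real.exp (-(π ^ 2 / g) * (m : ℝ) ^ 2) :=
    (gauss_summable _ hg' 0).congr fun n => by norm_num
  have hnorm : Summable fun m : ℤ => ‖(Real.exp (-(π ^ 2 / g) * (m : ℝ) ^ 2) : ℂ)
      * Complex.exp (2 * (π : ℂ) * Complex.I * (m : ℂ) * (y : ℂ))‖ := by
    refine hsum.congr fun m => ?_
    rw [show (2 * (π : ℂ) * Complex.I * (m : ℂ) * (y : ℂ)) = 2 * (π : ℂ) * Complex.I * ((m * y : ℝ) : ℂ) by push_cast; ring,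
      norm_aux, _root_.abs_of_nonneg (Real.exp_nonneg _)]
  have hS : 0 ≤ ∑' n : ℤ, Real.exp (-g * ((n : ℝ) + y) ^ 2) :=
    tsum_nonneg fun _ => Real.exp_nonneg _
  calc ∑' n : ℤ, Real.exp (-g * ((n : ℝ) + y) ^ 2)
      = ‖((∑' n : ℤ, Real.exp (-g * ((n : ℝ) + y) ^ 2) : ℝ) : ℂ)‖ := by
        rw [Complex.norm_real, Real.norm_eq_abs, _root_.abs_of_nonneg hS]
    _ = ‖(Real.sqrt (π / g) : ℂ) * ∑' m : ℤ, (Real.exp (-(π ^ 2 / g) * (m : ℝ) ^ 2) : ℂ)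
          * Complex.exp (2 * (π : ℂ) * Complex.I * (m : ℂ) * (y : ℂ))‖ := by
        rw [poisson1_real g y hg]
    _ ≤ Real.sqrt (π / g) * ∑' m : ℤ, Real.exp (-(π ^ 2 / g) * (m : ℝ) ^ 2) := by
        rw [norm_mul, Complex.norm_real, Real.norm_eq_abs,
          _root_.abs_of_nonneg (Real.sqrt_nonneg _)]
        refine mul_le_mul_of_nonneg_left ?_ (Real.sqrt_nonneg _)
        refine le_trans (norm_tsum_le_tsum_norm hnorm) (le_of_eq ?_)
        refine tsum_congr fun m => ?_
        rw [show (2 * (π : ℂ) * Complex.I * (m : ℂ) * (y : ℂ)) = 2 * (π : ℂ) * Complex.I * ((m * y : ℝ) : ℂ) by push_cast; ring,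
          norm_aux, _root_.abs_of_nonneg (Real.exp_nonneg _)]
    _ = ∑' n : ℤ, Real.exp (-g * (n : ℝ) ^ 2) := (tsum_zero_eq g hg).symm


lemma claim2 (α β γ y₁ y₂ : ℝ) (hα : 0 < α) (hγ : 0 < γ) :
    ((∑' n : ℤ × ℤ, Real.exp (-(γ * ((n.1 : ℝ) + y₁) ^ 2
        + α * ((n.2 : ℝ) + y₂ + β * ((n.1 : ℝ) + y₁)) ^ 2)) : ℝ) : ℂ) =
      (Real.sqrt (π / α) : ℂ) * (Real.sqrt (π / γ) : ℂ) *
        ∑' m : ℤ, (Real.exp (-(π ^ 2 / α) * (m : ℝ) ^ 2) : ℂ)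
          * Complex.exp (2 * (π : ℂ) * Complex.I * (m : ℂ) * (y₂ : ℂ))
          * ∑' k : ℤ, (Real.exp (-(π ^ 2 / γ) * ((k : ℝ) - β * m) ^ 2) : ℂ)
              * Complex.exp (2 * (π : ℂ) * Complex.I * (k : ℂ) * (y₁ : ℂ)) := by
  have hα' : 0 < π ^ 2 / α := by positivity
  set F : ℤ × ℤ → ℝ := fun n => Real.exp (-(γ * ((n.1 : ℝ) + y₁) ^ 2
      + α * ((n.2 : ℝ) + y₂ + β * ((n.1 : ℝ) + y₁)) ^ 2)) with hF
  set g₁ : ℤ → ℝ := fun a => Real.exp (-γ * ((a : ℝ) + y₁) ^ 2) with hg₁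
  set w : ℤ → ℝ := fun a => y₂ + β * ((a : ℝ) + y₁) with hw
  set s : ℤ → ℝ := fun m => Real.exp (-(π ^ 2 / α) * (m : ℝ) ^ 2) with hs
  have hFab : ∀ a b : ℤ, F (a, b) = g₁ a * Real.exp (-α * ((b : ℝ) + w a) ^ 2) := by
    intro a b
    simp only [hF, hg₁, hw]
    rw [← Real.exp_add]
    congr 1
    ring
  -- summability of F
  have hg₁sum : Summable g₁ := gauss_summable γ hγ y₁
  have hssum : Summable s := (gauss_summable _ hα' 0).congr fun n => by
    simp only [hs, add_zero]
  have hFinner : ∀ a : ℤ, Summable fun b : ℤ => F (a, b) := by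
    intro a
    refine ((gauss_summable α hα (w a)).mul_left (g₁ a)).congr fun b => (hFab a b).symm
  have hFrow : ∀ a : ℤ, ∑' b : ℤ, F (a, b)
      = g₁ a * ∑' b : ℤ, Real.exp (-α * ((b : ℝ) + w a) ^ 2) := by
    intro a
    rw [tsum_congr (hFab a), tsum_mul_left]
  have hBα : ∀ a : ℤ, ∑' b : ℤ, Real.exp (-α * ((b : ℝ) + w a) ^ 2)
      ≤ ∑' b : ℤ, Real.exp (-α * (b : ℝ) ^ 2) := fun a => oneD α (w a) hα
  have hFsum : Summable F := by
    refine (summable_prod_of_nonneg (fun n => Real.exp_nonneg _)).mpr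
      ⟨hFinner, ?_⟩
    refine Summable.of_nonneg_of_le (fun a => tsum_nonneg fun b => Real.exp_nonneg _)
      (fun a => ?_) (hg₁sum.mul_right (∑' b : ℤ, Real.exp (-α * (b : ℝ) ^ 2)))
    rw [hFrow a]
    exact mul_le_mul_of_nonneg_left (hBα a) (Real.exp_nonneg _)
  -- step 1
  have step1 : ((∑' n : ℤ × ℤ, F n : ℝ) : ℂ)
      = ∑' a : ℤ, ((g₁ a : ℝ) : ℂ) * ((Real.sqrt (π / α) : ℂ) * ∑' m : ℤ,
          ((s m : ℝ) : ℂ) * Complex.exp (2 * (π : ℂ) * Complex.I * (m : ℂ) * ((w a : ℝ) : ℂ))) := by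
    rw [hFsum.tsum_prod, Complex.ofReal_tsum]
    refine tsum_congr fun a => ?_
    rw [hFrow a, Complex.ofReal_mul, poisson1_real α (w a) hα]
  -- step 2 : reorganize into u
  set u : ℤ → ℤ → ℂ := fun a m => ((g₁ a * s m : ℝ) : ℂ)
      * Complex.exp (2 * (π : ℂ) * Complex.I * ((m * w a : ℝ) : ℂ)) with hu
  have step2 : ((∑' n : ℤ × ℤ, F n : ℝ) : ℂ)
      = (Real.sqrt (π / α) : ℂ) * ∑' a : ℤ, ∑' m : ℤ, u a m := by
    rw [step1, ← tsum_mul_left]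
    refine tsum_congr fun a => ?_
    rw [← mul_assoc, mul_comm (((g₁ a : ℝ) : ℂ)) ((Real.sqrt (π / α) : ℂ)), mul_assoc,
      ← tsum_mul_left]
    congr 1
    refine tsum_congr fun m => ?_
    simp only [hu]
    push_cast
    ring_nf
  -- swap
  have husum : Summable (Function.uncurry u) := by
    refine summable_norm_iff.mp ?_
    refine ((hg₁sum.mul_of_nonneg hssum (fun a => Real.exp_nonneg _)
      (fun m => Real.exp_nonneg _)).congr fun p => ?_)
    simp only [Function.uncurry, hu]
    rw [norm_aux]
    exact (_root_.abs_of_nonneg (mul_nonneg (Real.exp_nonneg _) (Real.exp_nonneg _))).symm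
  have step3 : ∑' a : ℤ, ∑' m : ℤ, u a m = ∑' m : ℤ, ∑' a : ℤ, u a m :=
    (husum.tsum_comm).symm
  -- step 4 : inner Poisson over a
  have step4 : ∀ m : ℤ, ∑' a : ℤ, u a m
      = ((s m : ℝ) : ℂ) * Complex.exp (2 * (π : ℂ) * Complex.I * (m : ℂ) * (y₂ : ℂ))
        * ((Real.sqrt (π / γ) : ℂ) * ∑' k : ℤ,
            ((Real.exp (-(π ^ 2 / γ) * ((k : ℝ) - β * m) ^ 2) : ℝ) : ℂ)
              * Complex.exp (2 * (π : ℂ) * Complex.I * (k : ℂ) * (y₁ : ℂ))) := by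
    intro m
    rw [← poisson1 γ (β * m) y₁ hγ, ← tsum_mul_left]
    refine tsum_congr fun a => ?_
    simp only [hu, hg₁, hs, hw]
    rw [Complex.ofReal_mul, Complex.ofReal_exp, Complex.ofReal_exp, ← Complex.exp_add,
      mul_comm, mul_assoc, ← Complex.exp_add, ← Complex.exp_add, ← Complex.exp_add]
    congr 1
    push_cast
    ring
  have step5 : ((∑' n : ℤ × ℤ, F n : ℝ) : ℂ)
      = (Real.sqrt (π / α) : ℂ) * (Real.sqrt (π / γ) : ℂ) *
        ∑' m : ℤ, ((s m : ℝ) : ℂ)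
          * Complex.exp (2 * (π : ℂ) * Complex.I * (m : ℂ) * (y₂ : ℂ))
          * ∑' k : ℤ, ((Real.exp (-(π ^ 2 / γ) * ((k : ℝ) - β * m) ^ 2) : ℝ) : ℂ)
              * Complex.exp (2 * (π : ℂ) * Complex.I * (k : ℂ) * (y₁ : ℂ)) := by
    rw [step2, step3, mul_assoc]
    congr 1
    rw [← tsum_mul_left]
    refine tsum_congr fun m => ?_
    rw [step4 m]
    ring
  exact step5


lemma core2 (α β γ y₁ y₂ : ℝ) (hα : 0 < α) (hγ : 0 < γ) :
    ∑' n : ℤ × ℤ, Real.exp (-(γ * ((n.1 : ℝ) + y₁) ^ 2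
        + α * ((n.2 : ℝ) + y₂ + β * ((n.1 : ℝ) + y₁)) ^ 2))
    ≤ ∑' n : ℤ × ℤ, Real.exp (-(γ * ((n.1 : ℝ) + 0) ^ 2
        + α * ((n.2 : ℝ) + 0 + β * ((n.1 : ℝ) + 0)) ^ 2)) := by
  have hα' : 0 < π ^ 2 / α := by positivity
  have hγ' : 0 < π ^ 2 / γ := by positivity
  set s : ℤ → ℝ := fun m => Real.exp (-(π ^ 2 / α) * (m : ℝ) ^ 2) with hs
  set d : ℤ → ℤ → ℝ := fun k m => Real.exp (-(π ^ 2 / γ) * ((k : ℝ) - β * m) ^ 2) with hd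
  set R : ℤ → ℝ := fun m => s m * ∑' k : ℤ, d k m with hR
  have hssum : Summable s := (gauss_summable _ hα' 0).congr fun n => by
    simp only [hs, add_zero]
  have hdsum : ∀ m : ℤ, Summable fun k : ℤ => d k m := by
    intro m
    refine (gauss_summable _ hγ' (-(β * m))).congr fun k => ?_
    simp only [hd]
    ring_nf
  have hdle : ∀ m : ℤ, ∑' k : ℤ, d k m ≤ ∑' k : ℤ, Real.exp (-(π ^ 2 / γ) * (k : ℝ) ^ 2) := by
    intro m
    refine le_trans (le_of_eq (tsum_congr fun k => ?_)) (oneD (π ^ 2 / γ) (-(β * m)) hγ')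
    simp only [hd]
    ring_nf
  have hdnn : ∀ m : ℤ, 0 ≤ ∑' k : ℤ, d k m := fun m => tsum_nonneg fun k => Real.exp_nonneg _
  have hRle : ∀ m : ℤ, R m ≤ s m * ∑' k : ℤ, Real.exp (-(π ^ 2 / γ) * (k : ℝ) ^ 2) := by
    intro m
    exact mul_le_mul_of_nonneg_left (hdle m) (Real.exp_nonneg _)
  have hRnn : ∀ m : ℤ, 0 ≤ R m := fun m => mul_nonneg (Real.exp_nonneg _) (hdnn m)
  have hRsum : Summable R :=
    Summable.of_nonneg_of_le hRnn hRle
      (hssum.mul_right (∑' k : ℤ, Real.exp (-(π ^ 2 / γ) * (k : ℝ) ^ 2)))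
  -- the complex terms
  set T : ℤ → ℂ := fun m => ((s m : ℝ) : ℂ)
      * Complex.exp (2 * (π : ℂ) * Complex.I * (m : ℂ) * (y₂ : ℂ))
      * ∑' k : ℤ, ((d k m : ℝ) : ℂ)
          * Complex.exp (2 * (π : ℂ) * Complex.I * (k : ℂ) * (y₁ : ℂ)) with hT
  have hTnorm : ∀ m : ℤ, ‖T m‖ ≤ R m := by
    intro m
    simp only [hT]
    rw [norm_mul, show (2 * (π : ℂ) * Complex.I * (m : ℂ) * (y₂ : ℂ))
        = 2 * (π : ℂ) * Complex.I * ((m * y₂ : ℝ) : ℂ) by push_cast; ring, norm_aux,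
      _root_.abs_of_nonneg (Real.exp_nonneg _)]
    refine mul_le_mul_of_nonneg_left ?_ (Real.exp_nonneg _)
    have hknorm : Summable fun k : ℤ => ‖((d k m : ℝ) : ℂ)
        * Complex.exp (2 * (π : ℂ) * Complex.I * (k : ℂ) * (y₁ : ℂ))‖ := by
      refine (hdsum m).congr fun k => ?_
      rw [show (2 * (π : ℂ) * Complex.I * (k : ℂ) * (y₁ : ℂ))
          = 2 * (π : ℂ) * Complex.I * ((k * y₁ : ℝ) : ℂ) by push_cast; ring, norm_aux,
        _root_.abs_of_nonneg (Real.exp_nonneg _)]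
    refine le_trans (norm_tsum_le_tsum_norm hknorm) (le_of_eq (tsum_congr fun k => ?_))
    rw [show (2 * (π : ℂ) * Complex.I * (k : ℂ) * (y₁ : ℂ))
        = 2 * (π : ℂ) * Complex.I * ((k * y₁ : ℝ) : ℂ) by push_cast; ring, norm_aux,
      _root_.abs_of_nonneg (Real.exp_nonneg _)]
  have hTnormsum : Summable fun m : ℤ => ‖T m‖ :=
    Summable.of_nonneg_of_le (fun m => norm_nonneg _) hTnorm hRsum
  -- value at zero
  have hzero : ∑' n : ℤ × ℤ, Real.exp (-(γ * ((n.1 : ℝ) + 0) ^ 2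
      + α * ((n.2 : ℝ) + 0 + β * ((n.1 : ℝ) + 0)) ^ 2))
      = Real.sqrt (π / α) * Real.sqrt (π / γ) * ∑' m : ℤ, R m := by
    have h0 := claim2 α β γ 0 0 hα hγ
    simp only [Complex.ofReal_zero, mul_zero, Complex.exp_zero, mul_one] at h0
    have hcast : ∑' m : ℤ, ((s m : ℝ) : ℂ) * ∑' k : ℤ, ((d k m : ℝ) : ℂ)
        = ((∑' m : ℤ, R m : ℝ) : ℂ) := by
      rw [Complex.ofReal_tsum]
      refine tsum_congr fun m => ?_
      rw [hR]
      simp only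
      rw [Complex.ofReal_mul, Complex.ofReal_tsum]
    rw [hcast] at h0
    exact_mod_cast h0
  -- main chain
  have hSnn : 0 ≤ ∑' n : ℤ × ℤ, Real.exp (-(γ * ((n.1 : ℝ) + y₁) ^ 2
      + α * ((n.2 : ℝ) + y₂ + β * ((n.1 : ℝ) + y₁)) ^ 2)) :=
    tsum_nonneg fun n => Real.exp_nonneg _
  calc ∑' n : ℤ × ℤ, Real.exp (-(γ * ((n.1 : ℝ) + y₁) ^ 2
        + α * ((n.2 : ℝ) + y₂ + β * ((n.1 : ℝ) + y₁)) ^ 2))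
      = ‖((∑' n : ℤ × ℤ, Real.exp (-(γ * ((n.1 : ℝ) + y₁) ^ 2
        + α * ((n.2 : ℝ) + y₂ + β * ((n.1 : ℝ) + y₁)) ^ 2)) : ℝ) : ℂ)‖ := by
        rw [Complex.norm_real, Real.norm_eq_abs, _root_.abs_of_nonneg hSnn]
    _ = ‖(Real.sqrt (π / α) : ℂ) * (Real.sqrt (π / γ) : ℂ) * ∑' m : ℤ, T m‖ := by
        rw [claim2 α β γ y₁ y₂ hα hγ]
    _ ≤ Real.sqrt (π / α) * Real.sqrt (π / γ) * ∑' m : ℤ, R m := by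
        rw [norm_mul, norm_mul, Complex.norm_real, Complex.norm_real, Real.norm_eq_abs,
          Real.norm_eq_abs, _root_.abs_of_nonneg (Real.sqrt_nonneg _),
          _root_.abs_of_nonneg (Real.sqrt_nonneg _)]
        refine mul_le_mul_of_nonneg_left ?_
          (mul_nonneg (Real.sqrt_nonneg _) (Real.sqrt_nonneg _))
        exact le_trans (norm_tsum_le_tsum_norm hTnormsum) (Summable.tsum_le_tsum hTnorm hTnormsum hRsum)
    _ = _ := hzero.symm


/-- The point of the lattice `Mℤ²` indexed by `n ∈ ℤ²`. -/
def latticePt (M : Matrix (Fin 2) (Fin 2) ℝ) (n : ℤ × ℤ) : ℝ × ℝ :=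
  (M.mulVec ![(n.1 : ℝ), (n.2 : ℝ)] 0, M.mulVec ![(n.1 : ℝ), (n.2 : ℝ)] 1)

/-- for a lattice `Λ = Mℤ²` in `ℝ²`, every `c > 0` and every `z ∈ ℝ²`,
`Σ_{λ∈Λ} e^{−c‖λ+z‖²} ≤ Σ_{λ∈Λ} e^{−c‖λ‖²}` (Euclidean norm): the periodized
Gaussian, i.e. the heat kernel on `ℝ²/Λ`, is maximal at the lattice points. -/
theorem heat_kernel_max_at_lattice_points
    (M : Matrix (Fin 2) (Fin 2) ℝ) (hM : IsUnit M.det) (c : ℝ) (hc : 0 < c)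
    (z : ℝ × ℝ) :
    ∑' n : ℤ × ℤ, Real.exp (-c *
        (((latticePt M n).1 + z.1) ^ 2 + ((latticePt M n).2 + z.2) ^ 2)) ≤
      ∑' n : ℤ × ℤ, Real.exp (-c *
        ((latticePt M n).1 ^ 2 + (latticePt M n).2 ^ 2)) := by

  have hdet : M.det ≠ 0 := hM.ne_zero
  rw [Matrix.det_fin_two] at hdet
  set A := M 0 0 with hA
  set B := M 0 1 with hB
  set C := M 1 0 with hC
  set D := M 1 1 with hD
  have hlp : ∀ n : ℤ × ℤ, latticePt M n = (A * n.1 + B * n.2, C * n.1 + D * n.2) := by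
    intro n
    simp [latticePt, Matrix.mulVec, dotProduct, Fin.sum_univ_two]
    exact ⟨rfl, rfl⟩
  have hBD : 0 < B ^ 2 + D ^ 2 := by
    rcases (by
      by_contra h
      push_neg at h
      exact hdet (by rw [h.1, h.2]; ring) : B ≠ 0 ∨ D ≠ 0) with h | h
    · positivity
    · positivity
  set α := c * (B ^ 2 + D ^ 2) with hα'
  set β := (A * B + C * D) / (B ^ 2 + D ^ 2) with hβ'
  set γ := c * (A * D - B * C) ^ 2 / (B ^ 2 + D ^ 2) with hγ'
  have hα : 0 < α := by positivity
  have hγ : 0 < γ := by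
    have h2 : (A * D - B * C) ≠ 0 := hdet
    positivity
  set y₁ := (D * z.1 - B * z.2) / (A * D - B * C) with hy₁
  set y₂ := (A * z.2 - C * z.1) / (A * D - B * C) with hy₂
  have key : ∀ s t : ℝ, c * ((A * s + B * t + z.1) ^ 2 + (C * s + D * t + z.2) ^ 2)
      = γ * (s + y₁) ^ 2 + α * (t + y₂ + β * (s + y₁)) ^ 2 := by
    intro s t
    rw [hα', hβ', hγ', hy₁, hy₂]
    field_simp
    ring
  have key0 : ∀ s t : ℝ, c * ((A * s + B * t) ^ 2 + (C * s + D * t) ^ 2)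
      = γ * (s + 0) ^ 2 + α * (t + 0 + β * (s + 0)) ^ 2 := by
    intro s t
    rw [hα', hβ', hγ']
    field_simp
    ring
  calc ∑' n : ℤ × ℤ, Real.exp (-c *
        (((latticePt M n).1 + z.1) ^ 2 + ((latticePt M n).2 + z.2) ^ 2))
      = ∑' n : ℤ × ℤ, Real.exp (-(γ * ((n.1 : ℝ) + y₁) ^ 2
          + α * ((n.2 : ℝ) + y₂ + β * ((n.1 : ℝ) + y₁)) ^ 2)) := by
        refine tsum_congr fun n => ?_
        rw [hlp n]
        congr 1
        rw [← key n.1 n.2]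
        ring
    _ ≤ ∑' n : ℤ × ℤ, Real.exp (-(γ * ((n.1 : ℝ) + 0) ^ 2
          + α * ((n.2 : ℝ) + 0 + β * ((n.1 : ℝ) + 0)) ^ 2)) := core2 α β γ y₁ y₂ hα hγ
    _ = ∑' n : ℤ × ℤ, Real.exp (-c *
        ((latticePt M n).1 ^ 2 + (latticePt M n).2 ^ 2)) := by
        refine tsum_congr fun n => ?_
        rw [hlp n]
        congr 1
        rw [← key0 n.1 n.2]
        ring


end
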